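/- Suppose S is a function with asymptotic behaviour S(θ) = c·θ^{-α} + o(θ^{-α}) as θ → 0, with c ≠ 0 and α > 0, satisfying the functional equation S(3θ) = G(S(θ)) near θ = 0, where G(x) = (3x⁴ - 6x² - 1)/(8x³). Then necessarily 3^{-α} = 3/8, i.e. α = ln(8/3)/ln 3. -/

import Mathlib

open Real Filter Asymptotics Topology

/-- If `S(θ) = c θ^{-α} + o(θ^{-α})` as `θ → 0⁺`, with `c ≠ 0`, `α > 0`, and
`S` satisfies the functional equation `S(3θ) = G(S(θ))` near `θ = 0`, where
`G(x) = (3x⁴ - 6x² - 1)/(8x³)`, then necessarily `3^{-α} = 3/8`,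
i.e. `α = ln(8/3)/ln 3`. -/
theorem schroder_no_simple_S (S : ℝ → ℝ) (c α : ℝ) (hc : c ≠ 0) (hα : 0 < α)
    (hasymp : (fun θ => S θ - c * θ ^ (-α)) =o[nhdsWithin 0 (Set.Ioi 0)]
      fun θ => θ ^ (-α))
    (hfe : ∀ᶠ θ in nhdsWithin 0 (Set.Ioi 0),
      S (3 * θ) = (3 * S θ ^ 4 - 6 * S θ ^ 2 - 1) / (8 * S θ ^ 3)) :
    (3 : ℝ) ^ (-α) = 3 / 8 ∧ α = Real.log (8 / 3) / Real.log 3 := by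
  set l : Filter ℝ := nhdsWithin 0 (Set.Ioi 0) with hl
  have hmem : ∀ᶠ θ in l, (0:ℝ) < θ := self_mem_nhdsWithin
  -- θ ^ α → 0
  have ht0 : Tendsto (fun θ : ℝ => θ ^ α) l (𝓝 0) := by
    have h := (Real.continuousAt_rpow_const 0 α (Or.inr hα.le)).tendsto
    rw [Real.zero_rpow hα.ne'] at h
    exact h.mono_left nhdsWithin_le_nhds
  -- A θ = S θ * θ^α → c
  have hA : Tendsto (fun θ => S θ * θ ^ α) l (𝓝 c) := by
    have h0 := hasymp.tendsto_div_nhds_zero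
    have h1 : Tendsto (fun θ => (S θ - c * θ ^ (-α)) / θ ^ (-α) + c) l (𝓝 (0 + c)) :=
      h0.add_const c
    rw [zero_add] at h1
    refine h1.congr' ?_
    filter_upwards [hmem] with θ hθ
    have hθt : (0:ℝ) < θ ^ α := Real.rpow_pos_of_pos hθ α
    rw [Real.rpow_neg hθ.le]
    field_simp
    ring
  -- θ ↦ 3θ maps l to l
  have h3 : Tendsto (fun θ : ℝ => 3 * θ) l l := by
    rw [hl, tendsto_nhdsWithin_iff]
    constructor
    · have : Tendsto (fun θ : ℝ => 3 * θ) (𝓝 0) (𝓝 (3 * 0)) :=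
        (continuous_const.mul continuous_id).tendsto 0
      simpa using this.mono_left nhdsWithin_le_nhds
    · filter_upwards [hmem] with θ hθ
      exact Set.mem_Ioi.mpr (by linarith)
  have hA3 : Tendsto (fun θ => S (3 * θ) * (3 * θ) ^ α) l (𝓝 c) := hA.comp h3
  -- S(3θ) * θ^α → c * 3^{-α}
  have hleft : Tendsto (fun θ => S (3 * θ) * θ ^ α) l (𝓝 (c * 3 ^ (-α))) := by
    have h := hA3.mul_const ((3:ℝ) ^ (-α))
    refine h.congr' ?_
    filter_upwards [hmem] with θ hθ
    have : ((3:ℝ) * θ) ^ α = 3 ^ α * θ ^ α :=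
      Real.mul_rpow (by norm_num) hθ.le
    rw [this]
    have h3α : (3:ℝ) ^ α * 3 ^ (-α) = 1 := by
      rw [← Real.rpow_add (by norm_num : (0:ℝ) < 3)]
      simp
    linear_combination (S (3 * θ) * θ ^ α) * h3α
  -- G(S θ) * θ^α → (3/8) c
  have hzero2 : Tendsto (fun θ => (θ ^ α) ^ 2 / (S θ * θ ^ α)) l (𝓝 0) := by
    have := ((ht0.pow 2).div hA hc)
    convert this using 2 <;> simp
  have hzero4 : Tendsto (fun θ => (θ ^ α) ^ 4 / (S θ * θ ^ α) ^ 3) l (𝓝 0) := by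
    have := ((ht0.pow 4).div (hA.pow 3) (pow_ne_zero 3 hc))
    convert this using 2 <;> simp
  have hright : Tendsto
      (fun θ => (3/8) * (S θ * θ ^ α) - (3/4) * ((θ ^ α) ^ 2 / (S θ * θ ^ α))
        - (1/8) * ((θ ^ α) ^ 4 / (S θ * θ ^ α) ^ 3)) l
      (𝓝 ((3/8) * c - (3/4) * 0 - (1/8) * 0)) :=
    ((hA.const_mul _).sub (hzero2.const_mul _)).sub (hzero4.const_mul _)
  -- eventual equality of the two expressions
  have hSne : ∀ᶠ θ in l, S θ * θ ^ α ≠ 0 := hA.eventually_ne hc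
  have heq : (fun θ => S (3 * θ) * θ ^ α) =ᶠ[l]
      (fun θ => (3/8) * (S θ * θ ^ α) - (3/4) * ((θ ^ α) ^ 2 / (S θ * θ ^ α))
        - (1/8) * ((θ ^ α) ^ 4 / (S θ * θ ^ α) ^ 3)) := by
    filter_upwards [hmem, hfe, hSne] with θ hθ hfeθ hne
    have hθt : (0:ℝ) < θ ^ α := Real.rpow_pos_of_pos hθ α
    have hx : S θ ≠ 0 := fun h => hne (by rw [h]; ring)
    rw [hfeθ]
    field_simp
    ring
  have hleft' : Tendsto (fun θ => S (3 * θ) * θ ^ α) l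
      (𝓝 ((3/8) * c - (3/4) * 0 - (1/8) * 0)) := hright.congr' heq.symm
  have hkey : c * 3 ^ (-α) = (3/8) * c - (3/4) * 0 - (1/8) * 0 :=
    tendsto_nhds_unique hleft hleft'
  have hpow : (3:ℝ) ^ (-α) = 3 / 8 := by
    have : c * 3 ^ (-α) = c * (3/8) := by rw [hkey]; ring
    exact mul_left_cancel₀ hc this
  refine ⟨hpow, ?_⟩
  have hlog : Real.log ((3:ℝ) ^ (-α)) = Real.log (3/8) := by rw [hpow]
  rw [Real.log_rpow (by norm_num : (0:ℝ) < 3)] at hlog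
  have h38 : Real.log (3/8 : ℝ) = - Real.log (8/3 : ℝ) := by
    rw [show (3/8 : ℝ) = (8/3 : ℝ)⁻¹ by norm_num, Real.log_inv]
  have hlog3 : Real.log 3 ≠ 0 := by
    have := Real.log_pos (by norm_num : (1:ℝ) < 3)
    linarith
  rw [h38] at hlog
  field_simp
  linarith [hlog]
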